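/- arXiv:2310.02471 — 3 statements merged into one kernel-verified Lean document; each statement's English description precedes it below -/
import Mathlib

section
/- Let g be a finite-dimensional nilpotent real Lie algebra equipped with a hypercomplex structure (I,J,K), and let ∇ be its Obata connection. Assume that ∇ is flat and that ∇_X is a nilpotent endomorphism of g for every X ∈ g (i.e. the algebraic holonomy representation is unipotent). Then g is H-solvable: there exists k ≥ 0 with g_k^H = 0. -/
open Submodule

section Hyper

variable {L : Type*} [LieRing L] [LieAlgebra ℝ L]

/-- A complex structure operator on a real Lie algebra: `I² = -id` and the integrability
identity `[IX,IY] = [X,Y] + I[IX,Y] + I[X,IY]` (equivalent to `g^{1,0}` being a subalgebra). -/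
def IsComplexStructureOp (I : L →ₗ[ℝ] L) : Prop :=
  (∀ x, I (I x) = -x) ∧ ∀ x y : L, ⁅I x, I y⁆ = ⁅x, y⁆ + I ⁅I x, y⁆ + I ⁅x, I y⁆

/-- A hypercomplex structure: a triple of complex structure operators with `IJ = K`
(together with `I² = J² = K² = -id` this gives the quaternionic relations). -/
structure IsHypercomplex (I J K : L →ₗ[ℝ] L) : Prop where
  hI : IsComplexStructureOp I
  hJ : IsComplexStructureOp J
  hK : IsComplexStructureOp K
  hIJ : ∀ x, I (J x) = K x

/-- The Obata connection `∇_X` as an endomorphism of `L`: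
`∇_X Y = ½([X,Y] + I[IX,Y] − J[X,JY] + K[IX,JY])`. -/
noncomputable def obataOp (I J K : L →ₗ[ℝ] L) (X : L) : Module.End ℝ L :=
  (1/2 : ℝ) • (LieAlgebra.ad ℝ L X + I ∘ₗ LieAlgebra.ad ℝ L (I X)
    - J ∘ₗ LieAlgebra.ad ℝ L X ∘ₗ J + K ∘ₗ LieAlgebra.ad ℝ L (I X) ∘ₗ J)

/-- Flatness of the Obata connection. -/
def ObataFlat (I J K : L →ₗ[ℝ] L) : Prop :=
  ∀ X Y Z : L, obataOp I J K X (obataOp I J K Y Z) - obataOp I J K Y (obataOp I J K X Z)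
    = obataOp I J K ⁅X, Y⁆ Z

/-- The set of brackets of elements of a subspace `W`. -/
def bracketSet (W : Submodule ℝ L) : Set L := {z : L | ∃ x ∈ W, ∃ y ∈ W, z = ⁅x, y⁆}

/-- `H[W,W] = span([W,W] ∪ I[W,W] ∪ J[W,W] ∪ K[W,W])`. -/
def Hbr (I J K : L →ₗ[ℝ] L) (W : Submodule ℝ L) : Submodule ℝ L :=
  span ℝ (bracketSet W ∪ I '' bracketSet W ∪ J '' bracketSet W ∪ K '' bracketSet W)

/-- The descending series `g_0^H = g`, `g_i^H = H[g_{i-1}^H, g_{i-1}^H]`. -/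
def gH (I J K : L →ₗ[ℝ] L) : ℕ → Submodule ℝ L
  | 0 => ⊤
  | i + 1 => Hbr I J K (gH I J K i)

end Hyper

/-! ### Auxiliary material for the proof -/

attribute [local instance 100] LieRing.ofAssociativeRing

section QuatAux

variable {L : Type*} [LieRing L] [LieAlgebra ℝ L] {I J K : L →ₗ[ℝ] L}

lemma obata_apply (I J K : L →ₗ[ℝ] L) (X Y : L) :
    obataOp I J K X Y
      = (1/2 : ℝ) • (⁅X, Y⁆ + I ⁅I X, Y⁆ - J ⁅X, J Y⁆ + K ⁅I X, J Y⁆) := by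
  simp [obataOp, LieAlgebra.ad_apply, LinearMap.smul_apply, LinearMap.add_apply,
    LinearMap.sub_apply, LinearMap.comp_apply]

lemma quat_aux1 (h : IsHypercomplex I J K) (y : L) : J (I (J y)) = I y := by
  have hinj : Function.Injective I := fun a b hab => by
    have := congrArg I hab; rwa [h.hI.1, h.hI.1, neg_inj] at this
  apply hinj
  have h2 : K (I (J y)) = -y := by rw [h.hIJ y]; exact h.hK.1 y
  rw [h.hIJ (I (J y)), h2, h.hI.1]

lemma hJI (h : IsHypercomplex I J K) (y : L) : J (I y) = -(K y) := by
  have hz : J (-(J y)) = y := by rw [map_neg, h.hJ.1, neg_neg]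
  have h1 := quat_aux1 h (-(J y))
  rw [hz] at h1
  rw [h1, map_neg, h.hIJ]

lemma hIK (h : IsHypercomplex I J K) (y : L) : I (K y) = -(J y) := by
  rw [← h.hIJ y, h.hI.1]

lemma hKI (h : IsHypercomplex I J K) (y : L) : K (I y) = J y := by
  rw [← h.hIJ (I y), hJI h y, map_neg, hIK h, neg_neg]

lemma hKJ (h : IsHypercomplex I J K) (y : L) : K (J y) = -(I y) := by
  rw [← h.hIJ (J y), h.hJ.1, map_neg]

lemma hJK (h : IsHypercomplex I J K) (y : L) : J (K y) = I y := by
  rw [← h.hIJ y]; exact quat_aux1 h y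

/-- Torsion-freeness of the Obata connection. -/
lemma obata_torsion (h : IsHypercomplex I J K) (X Y : L) :
    obataOp I J K X Y - obataOp I J K Y X = ⁅X, Y⁆ := by
  rw [obata_apply, obata_apply, ← smul_sub]
  have hA : I ⁅I X, Y⁆ = ⁅I X, I Y⁆ - ⁅X, Y⁆ - I ⁅X, I Y⁆ := by
    rw [h.hI.2 X Y]; abel
  have hB : J ⁅X, J Y⁆ = ⁅J X, J Y⁆ - ⁅X, Y⁆ - J ⁅J X, Y⁆ := by
    rw [h.hJ.2 X Y]; abel
  have hC : K ⁅I X, J Y⁆ = ⁅J X, J Y⁆ - ⁅I X, I Y⁆ - K ⁅J X, I Y⁆ := by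
    have c := h.hK.2 (J X) (J Y)
    rw [hKJ h X, hKJ h Y] at c
    simp only [neg_lie, lie_neg, neg_neg, map_neg] at c
    rw [← sub_eq_zero] at c ⊢
    rw [← c]; abel
  have hYX : ⁅Y, X⁆ = -⁅X, Y⁆ := by rw [← lie_skew X Y, neg_neg]
  have hIYX : I ⁅I Y, X⁆ = -(I ⁅X, I Y⁆) := by
    rw [show ⁅I Y, X⁆ = -⁅X, I Y⁆ by rw [← lie_skew X (I Y), neg_neg], map_neg]
  have hYJX : J ⁅Y, J X⁆ = -(J ⁅J X, Y⁆) := by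
    rw [show ⁅Y, J X⁆ = -⁅J X, Y⁆ by rw [← lie_skew (J X) Y, neg_neg], map_neg]
  have hIYJX : K ⁅I Y, J X⁆ = -(K ⁅J X, I Y⁆) := by
    rw [show ⁅I Y, J X⁆ = -⁅J X, I Y⁆ by rw [← lie_skew (J X) (I Y), neg_neg], map_neg]
  have key : (⁅X, Y⁆ + I ⁅I X, Y⁆ - J ⁅X, J Y⁆ + K ⁅I X, J Y⁆)
      - (⁅Y, X⁆ + I ⁅I Y, X⁆ - J ⁅Y, J X⁆ + K ⁅I Y, J X⁆) = ⁅X, Y⁆ + ⁅X, Y⁆ := by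
    rw [hA, hB, hC, hYX, hIYX, hYJX, hIYJX]; abel
  rw [key, ← two_smul ℝ, smul_smul]
  norm_num

/-- The Obata connection commutes with `I`. -/
lemma obata_commI (h : IsHypercomplex I J K) (X Y : L) :
    obataOp I J K X (I Y) = I (obataOp I J K X Y) := by
  rw [obata_apply, obata_apply, map_smul]
  congr 1
  have e1 : I ⁅I X, I Y⁆ = I ⁅X, Y⁆ - ⁅I X, Y⁆ - ⁅X, I Y⁆ := by
    rw [h.hI.2 X Y, map_add, map_add, h.hI.1, h.hI.1]; abel
  have e2 : K ⁅I X, K Y⁆ = K ⁅X, J Y⁆ + J ⁅I X, J Y⁆ + J ⁅X, K Y⁆ := by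
    have c := h.hI.2 X (J Y)
    rw [h.hIJ Y] at c
    rw [c, map_add, map_add, hKI h, hKI h]
  rw [hJI h Y]
  simp only [map_add, map_sub, lie_neg, map_neg, h.hI.1, hIK h, h.hIJ]
  rw [e1, e2]
  abel

/-- The Obata connection commutes with `J`. -/
lemma obata_commJ (h : IsHypercomplex I J K) (X Y : L) :
    obataOp I J K X (J Y) = J (obataOp I J K X Y) := by
  rw [obata_apply, obata_apply, map_smul]
  congr 1
  rw [h.hJ.1 Y]
  simp only [map_add, map_sub, lie_neg, map_neg, h.hJ.1, hJI h, hJK h]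
  abel

/-- The Obata connection commutes with `K`. -/
lemma obata_commK (h : IsHypercomplex I J K) (X Y : L) :
    obataOp I J K X (K Y) = K (obataOp I J K X Y) := by
  rw [← h.hIJ Y, obata_commI h, obata_commJ h, h.hIJ]

lemma obata_addX (I J K : L →ₗ[ℝ] L) (X X' Y : L) :
    obataOp I J K (X + X') Y = obataOp I J K X Y + obataOp I J K X' Y := by
  simp only [obata_apply, map_add, add_lie, ← smul_add]
  congr 1
  abel

lemma obata_smulX (I J K : L →ₗ[ℝ] L) (t : ℝ) (X Y : L) :
    obataOp I J K (t • X) Y = t • obataOp I J K X Y := by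
  simp only [obata_apply, map_smul, smul_lie, ← smul_add, ← smul_sub]
  rw [smul_comm]

/-- The Obata connection as a Lie algebra morphism (flatness). -/
noncomputable def obataHom (I J K : L →ₗ[ℝ] L) (hflat : ObataFlat I J K) :
    L →ₗ⁅ℝ⁆ Module.End ℝ L where
  toFun := obataOp I J K
  map_add' X X' := LinearMap.ext fun Y => obata_addX I J K X X' Y
  map_smul' t X := LinearMap.ext fun Y => obata_smulX I J K t X Y
  map_lie' := by
    intro X Y
    ext Z
    simpa [Ring.lie_def, LinearMap.sub_apply, Module.End.mul_apply] using (hflat X Y Z).symm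

end QuatAux

/-- The descending series of submodules generated by a representation `f`. -/
def nablaSeries {L M : Type*} [LieRing L] [LieAlgebra ℝ L] [AddCommGroup M] [Module ℝ M]
    (f : L →ₗ⁅ℝ⁆ Module.End ℝ M) : ℕ → Submodule ℝ M
  | 0 => ⊤
  | n + 1 => span ℝ {z : M | ∃ x : L, ∃ m ∈ nablaSeries f n, z = f x m}

/-- If every operator `f x` is nilpotent, Engel's theorem makes the series terminate. -/
lemma nablaSeries_eventually_bot {L M : Type*} [LieRing L] [LieAlgebra ℝ L]
    [FiniteDimensional ℝ L] [AddCommGroup M] [Module ℝ M]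
    (f : L →ₗ⁅ℝ⁆ Module.End ℝ M) (hnil : ∀ x : L, IsNilpotent (f x)) :
    ∃ k : ℕ, nablaSeries f k = ⊥ := by
  letI : LieRingModule L M := LieRingModule.compLieHom M f
  letI : LieModule ℝ L M := LieModule.compLieHom M f
  have htoEnd : ∀ x : L, LieModule.toEnd ℝ L M x = f x :=
    fun x => LinearMap.ext fun m => rfl
  have hnilM : ∀ x : L, IsNilpotent (LieModule.toEnd ℝ L M x) := by
    intro x; rw [htoEnd x]; exact hnil x
  haveI hN : LieModule.IsNilpotent L M :=
    LieAlgebra.isEngelian_of_isNoetherian M hnilM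
  obtain ⟨k, hk⟩ := LieModule.IsNilpotent.nilpotent ℝ L M
  have hle : ∀ n : ℕ, ∀ z : M, z ∈ nablaSeries f n →
      z ∈ LieModule.lowerCentralSeries ℝ L M n := by
    intro n
    induction n with
    | zero => intro z _; rw [LieModule.lowerCentralSeries_zero]; trivial
    | succ n ih =>
      intro z hz
      have : {z : M | ∃ x : L, ∃ m ∈ nablaSeries f n, z = f x m}
          ⊆ (LieModule.lowerCentralSeries ℝ L M (n + 1) : Submodule ℝ M) := by
        rintro z ⟨x, m, hm, rfl⟩
        rw [SetLike.mem_coe, LieSubmodule.mem_toSubmodule, LieModule.lowerCentralSeries_succ]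
        exact LieSubmodule.lie_mem_lie (LieSubmodule.mem_top x) (ih m hm)
      have h2 := Submodule.span_le.mpr this
      rw [← LieSubmodule.mem_toSubmodule]
      exact h2 hz
  refine ⟨k, ?_⟩
  rw [eq_bot_iff]
  intro z hz
  have := hle k z hz
  rw [hk] at this
  simpa using this

/-- a finite-dimensional nilpotent hypercomplex real Lie algebra with flat
Obata connection and unipotent algebraic holonomy (each `∇_X` nilpotent) is H-solvable. -/
theorem hsolvable_of_flat_unipotent {L : Type*} [LieRing L] [LieAlgebra ℝ L]
    [FiniteDimensional ℝ L] [LieRing.IsNilpotent L]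
    (I J K : L →ₗ[ℝ] L) (h : IsHypercomplex I J K)
    (hflat : ObataFlat I J K)
    (hnil : ∀ X : L, IsNilpotent (obataOp I J K X)) :
    ∃ k : ℕ, gH I J K k = ⊥ := by
  set f : L →ₗ⁅ℝ⁆ Module.End ℝ L := obataHom I J K hflat with hf
  have hfx : ∀ x : L, f x = obataOp I J K x := fun x => rfl
  obtain ⟨k, hk⟩ := nablaSeries_eventually_bot f hnil
  -- the series is invariant under any operator commuting with the connection
  have key : ∀ (T : L →ₗ[ℝ] L), (∀ X Y : L, obataOp I J K X (T Y) = T (obataOp I J K X Y)) →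
      ∀ n : ℕ, ∀ z : L, z ∈ nablaSeries f n → T z ∈ nablaSeries f n := by
    intro T hT n
    induction n with
    | zero => intro z _; trivial
    | succ n ih =>
      intro z hz
      induction hz using Submodule.span_induction with
      | mem m hm =>
        obtain ⟨x, nn, hnn, rfl⟩ := hm
        exact Submodule.subset_span ⟨x, T nn, ih nn hnn, (hT x nn).symm⟩
      | zero => rw [map_zero]; exact Submodule.zero_mem _
      | add a b _ _ ha hb => rw [map_add]; exact Submodule.add_mem _ ha hb
      | smul t a _ ha => rw [map_smul]; exact Submodule.smul_mem _ t ha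
  -- the H-series is contained in the nabla series
  have incl : ∀ n : ℕ, ∀ z : L, z ∈ gH I J K n → z ∈ nablaSeries f n := by
    intro n
    induction n with
    | zero => intro z _; trivial
    | succ n ih =>
      intro z hz
      have main : ∀ (T : L →ₗ[ℝ] L),
          (∀ X Y : L, obataOp I J K X (T Y) = T (obataOp I J K X Y)) →
          ∀ u ∈ bracketSet (gH I J K n), T u ∈ nablaSeries f (n + 1) := by
        rintro T hT u ⟨x, hx, y, hy, rfl⟩
        have hx' := ih x hx
        have hy' := ih y hy
        have e : T ⁅x, y⁆ = obataOp I J K x (T y) - obataOp I J K y (T x) := by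
          rw [hT, hT, ← map_sub, obata_torsion h]
        rw [e]
        exact sub_mem
          (Submodule.subset_span ⟨x, T y, key T hT n y hy', rfl⟩)
          (Submodule.subset_span ⟨y, T x, key T hT n x hx', rfl⟩)
      have hgen : ∀ u ∈ (bracketSet (gH I J K n) ∪ I '' bracketSet (gH I J K n)
          ∪ J '' bracketSet (gH I J K n) ∪ K '' bracketSet (gH I J K n)),
          u ∈ nablaSeries f (n + 1) := by
        rintro u (((hu | ⟨v, hv, rfl⟩) | ⟨v, hv, rfl⟩) | ⟨v, hv, rfl⟩)
        · have := main LinearMap.id (fun _ _ => rfl) u hu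
          simpa using this
        · exact main I (obata_commI h) v hv
        · exact main J (obata_commJ h) v hv
        · exact main K (obata_commK h) v hv
      have hle : gH I J K (n + 1) ≤ nablaSeries f (n + 1) := by
        rw [show gH I J K (n + 1) = Hbr I J K (gH I J K n) from rfl, Hbr]
        exact Submodule.span_le.mpr hgen
      exact hle hz
  refine ⟨k, ?_⟩
  rw [eq_bot_iff]
  intro z hz
  have hz2 := incl k z hz
  rw [hk] at hz2
  simpa using hz2
end

section
/- Let g be a real Lie algebra with a hypercomplex structure (I,J,K) and Obata connection ∇. Then for every i ≥ 0 and all X, Y ∈ g_i^H, one has ∇_X Y ∈ g_{i+1}^H. -/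
open Submodule

section AuxLemmas

variable {L : Type*} [LieRing L] [LieAlgebra ℝ L] {I J K : L →ₗ[ℝ] L}

lemma hyper_IK (h : IsHypercomplex I J K) (x : L) : I (K x) = -(J x) := by
  rw [← h.hIJ, h.hI.1]

lemma hyper_JK (h : IsHypercomplex I J K) (x : L) : J (K x) = I x := by
  have h1 : I (J (K x)) = -x := by rw [h.hIJ, h.hK.1]
  have h2 := congrArg I h1
  rw [h.hI.1, map_neg] at h2
  exact neg_injective h2

lemma hyper_JI (h : IsHypercomplex I J K) (x : L) : J (I x) = -(K x) := by
  have h1 : I x = -(K (J x)) := by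
    rw [← h.hIJ]
    calc I x = I (-(J (J x))) := by rw [h.hJ.1, neg_neg]
    _ = -(I (J (J x))) := map_neg _ _
  rw [h1, map_neg, hyper_JK h, h.hIJ]

lemma bracket_mem_Hbr {W : Submodule ℝ L} {u v : L} (hu : u ∈ W) (hv : v ∈ W) :
    ⁅u, v⁆ ∈ Hbr I J K W :=
  Submodule.subset_span (Or.inl (Or.inl (Or.inl ⟨u, hu, v, hv, rfl⟩)))

lemma I_bracket_mem_Hbr {W : Submodule ℝ L} {u v : L} (hu : u ∈ W) (hv : v ∈ W) :
    I ⁅u, v⁆ ∈ Hbr I J K W :=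
  Submodule.subset_span (Or.inl (Or.inl (Or.inr ⟨⁅u, v⁆, ⟨u, hu, v, hv, rfl⟩, rfl⟩)))

lemma J_bracket_mem_Hbr {W : Submodule ℝ L} {u v : L} (hu : u ∈ W) (hv : v ∈ W) :
    J ⁅u, v⁆ ∈ Hbr I J K W :=
  Submodule.subset_span (Or.inl (Or.inr ⟨⁅u, v⁆, ⟨u, hu, v, hv, rfl⟩, rfl⟩))

lemma K_bracket_mem_Hbr {W : Submodule ℝ L} {u v : L} (hu : u ∈ W) (hv : v ∈ W) :
    K ⁅u, v⁆ ∈ Hbr I J K W :=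
  Submodule.subset_span (Or.inr ⟨⁅u, v⁆, ⟨u, hu, v, hv, rfl⟩, rfl⟩)

lemma Hbr_invariant (h : IsHypercomplex I J K) (W : Submodule ℝ L) {x : L}
    (hx : x ∈ Hbr I J K W) : I x ∈ Hbr I J K W ∧ J x ∈ Hbr I J K W := by
  induction hx using Submodule.span_induction with
  | mem y hy =>
    rcases hy with ((⟨u, hu, v, hv, rfl⟩ | ⟨z, ⟨u, hu, v, hv, rfl⟩, rfl⟩) |
      ⟨z, ⟨u, hu, v, hv, rfl⟩, rfl⟩) | ⟨z, ⟨u, hu, v, hv, rfl⟩, rfl⟩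
    · exact ⟨I_bracket_mem_Hbr hu hv, J_bracket_mem_Hbr hu hv⟩
    · refine ⟨?_, ?_⟩
      · rw [h.hI.1]
        exact neg_mem (bracket_mem_Hbr hu hv)
      · rw [hyper_JI h]
        exact neg_mem (K_bracket_mem_Hbr hu hv)
    · refine ⟨?_, ?_⟩
      · rw [h.hIJ]
        exact K_bracket_mem_Hbr hu hv
      · rw [h.hJ.1]
        exact neg_mem (bracket_mem_Hbr hu hv)
    · refine ⟨?_, ?_⟩
      · rw [hyper_IK h]
        exact neg_mem (J_bracket_mem_Hbr hu hv)
      · rw [hyper_JK h]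
        exact I_bracket_mem_Hbr hu hv
  | zero => simp
  | add a b _ _ ha hb =>
    exact ⟨by rw [map_add]; exact add_mem ha.1 hb.1, by rw [map_add]; exact add_mem ha.2 hb.2⟩
  | smul c a _ ha =>
    exact ⟨by rw [map_smul]; exact Submodule.smul_mem _ _ ha.1,
           by rw [map_smul]; exact Submodule.smul_mem _ _ ha.2⟩

lemma gH_invariant (h : IsHypercomplex I J K) (i : ℕ) {x : L} (hx : x ∈ gH I J K i) :
    I x ∈ gH I J K i ∧ J x ∈ gH I J K i := by
  cases i with
  | zero => exact ⟨trivial, trivial⟩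
  | succ n => exact Hbr_invariant h _ hx

end AuxLemmas

/-- the Obata connection maps `g_i^H × g_i^H` into `g_{i+1}^H`. -/
theorem obata_maps_gH {L : Type*} [LieRing L] [LieAlgebra ℝ L]
    (I J K : L →ₗ[ℝ] L) (h : IsHypercomplex I J K) :
    ∀ (i : ℕ) (X Y : L), X ∈ gH I J K i → Y ∈ gH I J K i →
      obataOp I J K X Y ∈ gH I J K (i + 1) := by
  intro i X Y hX hY
  have hIX : I X ∈ gH I J K i := (gH_invariant h i hX).1
  have hJY : J Y ∈ gH I J K i := (gH_invariant h i hY).2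
  have heq : obataOp I J K X Y
      = (1/2 : ℝ) • (⁅X, Y⁆ + I ⁅I X, Y⁆ - J ⁅X, J Y⁆ + K ⁅I X, J Y⁆) := by
    simp [obataOp, LieAlgebra.ad_apply]
  rw [heq]
  show _ ∈ Hbr I J K (gH I J K i)
  exact Submodule.smul_mem _ _
    (add_mem (sub_mem (add_mem (bracket_mem_Hbr hX hY) (I_bracket_mem_Hbr hIX hY))
      (J_bracket_mem_Hbr hX hJY)) (K_bracket_mem_Hbr hIX hJY))
end

section
/- Let g be a real Lie algebra with a hypercomplex structure (I,J,K). Then the subspace H[g,g] = span([g,g] ∪ I[g,g] ∪ J[g,g] ∪ K[g,g]) is a Lie ideal of g and is invariant under I, J, and K. -/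
open Submodule

/-- `H[g,g]` is a Lie ideal of `g`, invariant under `I`, `J` and `K`. -/
theorem Hbr_top_isIdeal_invariant {L : Type*} [LieRing L] [LieAlgebra ℝ L]
    (I J K : L →ₗ[ℝ] L) (h : IsHypercomplex I J K) :
    (∀ (x : L), ∀ y ∈ Hbr I J K ⊤, ⁅x, y⁆ ∈ Hbr I J K ⊤) ∧
    (∀ y ∈ Hbr I J K ⊤, I y ∈ Hbr I J K ⊤) ∧
    (∀ y ∈ Hbr I J K ⊤, J y ∈ Hbr I J K ⊤) ∧
    (∀ y ∈ Hbr I J K ⊤, K y ∈ Hbr I J K ⊤) := by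
  obtain ⟨⟨hI2, -⟩, ⟨hJ2, -⟩, ⟨hK2, -⟩, hIJ⟩ := h
  set S : Set L := bracketSet (⊤ : Submodule ℝ L) ∪ I '' bracketSet ⊤ ∪ J '' bracketSet ⊤
      ∪ K '' bracketSet ⊤ with hS
  have hBH : ∀ z ∈ bracketSet (⊤ : Submodule ℝ L), z ∈ Hbr I J K ⊤ := fun z hz =>
    subset_span (Or.inl (Or.inl (Or.inl hz)))
  have hIH : ∀ z ∈ bracketSet (⊤ : Submodule ℝ L), I z ∈ Hbr I J K ⊤ := fun z hz =>
    subset_span (Or.inl (Or.inl (Or.inr ⟨z, hz, rfl⟩)))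
  have hJH : ∀ z ∈ bracketSet (⊤ : Submodule ℝ L), J z ∈ Hbr I J K ⊤ := fun z hz =>
    subset_span (Or.inl (Or.inr ⟨z, hz, rfl⟩))
  have hKH : ∀ z ∈ bracketSet (⊤ : Submodule ℝ L), K z ∈ Hbr I J K ⊤ := fun z hz =>
    subset_span (Or.inr ⟨z, hz, rfl⟩)
  -- quaternion identities
  have hJIJ : ∀ w, J (I (J w)) = I w := by
    intro w
    have h1 : I (J (I (J w))) = -w := by rw [hIJ, hIJ]; exact hK2 w
    have h2 := congrArg I h1
    rw [hI2, map_neg] at h2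
    exact neg_injective h2
  have hJI : ∀ z, J (I z) = -K z := by
    intro z
    have h1 := hJIJ (-(J z))
    simp only [map_neg, hJ2, neg_neg, hIJ] at h1
    exact h1
  have hKI : ∀ z, K (I z) = J z := by
    intro z
    rw [← hIJ, hJI, map_neg, ← hIJ, hI2, neg_neg]
  have hKJ : ∀ z, K (J z) = -I z := by
    intro z
    rw [← hIJ, hJ2, map_neg]
  have hJK : ∀ z, J (K z) = I z := by
    intro z
    rw [← hIJ, hJIJ]
  have hIK : ∀ z, I (K z) = -J z := by
    intro z
    rw [← hIJ, hI2]
  refine ⟨fun x y _ => hBH _ ⟨x, trivial, y, trivial, rfl⟩, ?_, ?_, ?_⟩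
  · intro y hy
    refine Submodule.span_induction (p := fun z _ => I z ∈ Hbr I J K ⊤) ?_ ?_ ?_ ?_ hy
    · rintro s (((hs | ⟨z, hz, rfl⟩) | ⟨z, hz, rfl⟩) | ⟨z, hz, rfl⟩)
      · exact hIH s hs
      · rw [hI2]; exact neg_mem (hBH z hz)
      · rw [hIJ]; exact hKH z hz
      · rw [hIK]; exact neg_mem (hJH z hz)
    · simp
    · intro a b _ _ ha hb; rw [map_add]; exact add_mem ha hb
    · intro c a _ ha; rw [map_smul]; exact smul_mem _ _ ha
  · intro y hy
    refine Submodule.span_induction (p := fun z _ => J z ∈ Hbr I J K ⊤) ?_ ?_ ?_ ?_ hy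
    · rintro s (((hs | ⟨z, hz, rfl⟩) | ⟨z, hz, rfl⟩) | ⟨z, hz, rfl⟩)
      · exact hJH s hs
      · rw [hJI]; exact neg_mem (hKH z hz)
      · rw [hJ2]; exact neg_mem (hBH z hz)
      · rw [hJK]; exact hIH z hz
    · simp
    · intro a b _ _ ha hb; rw [map_add]; exact add_mem ha hb
    · intro c a _ ha; rw [map_smul]; exact smul_mem _ _ ha
  · intro y hy
    refine Submodule.span_induction (p := fun z _ => K z ∈ Hbr I J K ⊤) ?_ ?_ ?_ ?_ hy
    · rintro s (((hs | ⟨z, hz, rfl⟩) | ⟨z, hz, rfl⟩) | ⟨z, hz, rfl⟩)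
      · exact hKH s hs
      · rw [hKI]; exact hJH z hz
      · rw [hKJ]; exact neg_mem (hIH z hz)
      · rw [hK2]; exact neg_mem (hBH z hz)
    · simp
    · intro a b _ _ ha hb; rw [map_add]; exact add_mem ha hb
    · intro c a _ ha; rw [map_smul]; exact smul_mem _ _ ha
end
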